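/- (Blow-up rate upper bound independent of M.) Let q > 1, Λ > 0, T > 0, and for each M > 0 let Γ^M solve -dΓ^M/dt = Λ - |Γ^M|^{q*}/((q*-1)Λ^{q*-1}) on [0,T) with Γ^M(T) = M, where q* = q/(q-1). Suppose ε ∈ (0,T) and M₀ are such that Γ^M(t) > ΛT for all M > M₀ and t ∈ [T-ε, T]. Then there exists a constant C₀ depending only on Λ and T (not on M) such that Γ^M(t) ≤ C₀/(T-t)^{q-1} for all t ∈ [0,T) and all M > M₀. -/

import Mathlib

open Real Set Filter Topology

set_option maxHeartbeats 2000000 in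
/-- Blow-up rate upper bound, independent of the terminal value M, for the solutions
of -Γ' = Λ - |Γ|^{q*}/((q*-1)Λ^{q*-1}) with Γ(T) = M. -/
theorem stmt7 (q qs Λ T ε M₀ : ℝ) (hq : 1 < q) (hqs : qs = q / (q-1))
    (hΛ : 0 < Λ) (hT : 0 < T) (hε : 0 < ε) (hεT : ε < T)
    (Γ : ℝ → ℝ → ℝ)
    (hcont : ∀ M, M₀ < M → ContinuousOn (Γ M) (Icc 0 T))
    (hode : ∀ M, M₀ < M → ∀ t ∈ Ico (0:ℝ) T,
      HasDerivAt (Γ M) (|Γ M t| ^ qs / ((qs-1) * Λ^(qs-1)) - Λ) t)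
    (hterm : ∀ M, M₀ < M → Γ M T = M)
    (hbig : ∀ M, M₀ < M → ∀ t ∈ Icc (T-ε) T, Λ * T < Γ M t) :
    ∃ C₀ > 0, ∀ M, M₀ < M → ∀ t ∈ Ico (0:ℝ) T, Γ M t ≤ C₀ / (T-t)^(q-1) := by
  have hp0 : (0:ℝ) < q - 1 := by linarith
  set p : ℝ := q - 1 with hpdef
  have hq0 : (0:ℝ) < q := by linarith
  have hpq : p + 1 = q := by rw [hpdef]; ring
  have hqs1 : qs - 1 = 1 / p := by
    rw [hqs, hpdef, div_sub_one (show q - 1 ≠ 0 by linarith)]; ring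
  have hpqs : p * qs = q := by
    rw [hqs, hpdef]; field_simp; exact div_self (show q - 1 ≠ 0 by linarith)
  set K : ℝ := Λ ^ (1/p) with hKdef
  have hK : (0:ℝ) < K := rpow_pos_of_pos hΛ _
  have hTq : (0:ℝ) < T ^ q := rpow_pos_of_pos hT _
  set A : ℝ := (Λ * T ^ q + 1) / p with hAdef
  have hA0 : 0 < A := by positivity
  set C : ℝ := max 1 (max A ((2*K) ^ p)) with hCdef
  have hC1 : (1:ℝ) ≤ C := le_max_left _ _
  have hC0 : (0:ℝ) < C := lt_of_lt_of_le one_pos hC1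
  have hCA : A ≤ C := le_trans (le_max_left _ _) (le_max_right _ _)
  have hCK : (2*K) ^ p ≤ C := le_trans (le_max_right _ _) (le_max_right _ _)
  have hCbig : K * C + K * A ≤ C ^ qs := by
    have h1 : C ^ qs = C * C ^ (1/p) := by
      rw [show qs = 1 + 1/p by rw [← hqs1]; ring, rpow_add hC0, rpow_one]
    have h2 : 2*K ≤ C ^ (1/p) := by
      have h := rpow_le_rpow (by positivity) hCK (le_of_lt (by positivity : (0:ℝ) < 1/p))
      rwa [← rpow_mul (by positivity : (0:ℝ) ≤ 2*K), mul_one_div, div_self hp0.ne',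
        rpow_one] at h
    calc K*C + K*A ≤ K*C + K*C := by nlinarith
    _ = C * (2*K) := by ring
    _ ≤ C * C^(1/p) := by nlinarith
    _ = C ^ qs := h1.symm
  clear_value p K A C
  refine ⟨C, hC0, ?_⟩
  intro M hM t₁ ht₁
  by_contra hcon
  push_neg at hcon
  set W : ℝ → ℝ := fun t => C / (T - t) ^ p with hWdef
  -- boundedness of Γ M
  obtain ⟨B, hB⟩ := isCompact_Icc.exists_bound_of_continuousOn (hcont M hM)
  set B' : ℝ := max B 1 with hB'def
  have hB'0 : (0:ℝ) < B' := lt_of_lt_of_le one_pos (le_max_right _ _)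
  -- choice of t₃
  have hCB' : 0 < C / B' := by positivity
  set δ : ℝ := min ((C / B') ^ (1/p) / 2) ((T - t₁)/2) with hδdef
  have hδ0 : 0 < δ := by
    apply lt_min
    · positivity
    · have := ht₁.2; linarith
  set t₃ : ℝ := T - δ with ht₃def
  have ht₃T : t₃ < T := by rw [ht₃def]; linarith
  have ht₁₃ : t₁ < t₃ := by
    have h := min_le_right ((C / B')^(1/p)/2) ((T-t₁)/2)
    have h2 := ht₁.2
    rw [ht₃def]
    have : δ ≤ (T - t₁)/2 := h
    linarith
  have hδp : δ ^ p < C / B' := by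
    have h1 : δ ≤ (C/B')^(1/p)/2 := min_le_left _ _
    have h2 : δ ^ p ≤ ((C/B')^(1/p)/2) ^ p := rpow_le_rpow hδ0.le h1 hp0.le
    have h3 : ((C/B')^(1/p)/2) ^ p < ((C/B')^(1/p)) ^ p := by
      apply rpow_lt_rpow (by positivity) _ hp0
      have : (0:ℝ) < (C/B')^(1/p) := rpow_pos_of_pos hCB' _
      linarith
    have h4 : ((C/B')^(1/p)) ^ p = C/B' := by
      rw [← rpow_mul hCB'.le, one_div_mul_cancel hp0.ne', rpow_one]
    linarith
  have hWt₃ : B' < W t₃ := by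
    have hδppos : 0 < δ ^ p := rpow_pos_of_pos hδ0 _
    have hTt₃ : T - t₃ = δ := by rw [ht₃def]; ring
    show B' < C / (T - t₃) ^ p
    rw [hTt₃, lt_div_iff₀ hδppos]
    calc B' * δ^p < B' * (C/B') := by nlinarith
    _ = C := by field_simp
  set D : ℝ → ℝ := fun t => Γ M t - W t with hDdef
  have hDt₁ : 0 < D t₁ := by
    have : W t₁ = C / (T - t₁) ^ p := rfl
    show 0 < Γ M t₁ - W t₁
    rw [this]; linarith
  have ht₃Icc : t₃ ∈ Icc (0:ℝ) T := ⟨by linarith [ht₁.1], ht₃T.le⟩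
  have hDt₃ : D t₃ < 0 := by
    have h1 := hB t₃ ht₃Icc
    rw [Real.norm_eq_abs] at h1
    have h2 : Γ M t₃ ≤ B := le_trans (le_abs_self _) h1
    have h3 : B ≤ B' := le_max_left _ _
    show Γ M t₃ - W t₃ < 0
    linarith
  -- continuity of D on [t₁, t₃]
  have hWcont : ContinuousOn W (Icc t₁ t₃) := by
    apply ContinuousOn.div continuousOn_const
    · apply ContinuousOn.rpow_const (continuous_const.sub continuous_id).continuousOn
      intro t ht
      left
      have : t < T := lt_of_le_of_lt ht.2 ht₃T
      have : 0 < T - t := by linarith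
      exact this.ne'
    · intro t ht
      have : t < T := lt_of_le_of_lt ht.2 ht₃T
      exact (rpow_pos_of_pos (by linarith) p).ne'
  have hsubIcc : Icc t₁ t₃ ⊆ Icc 0 T := Icc_subset_Icc ht₁.1 ht₃T.le
  have hDcont : ContinuousOn D (Icc t₁ t₃) := ((hcont M hM).mono hsubIcc).sub hWcont
  set S : Set ℝ := {t | t ∈ Icc t₁ t₃ ∧ D t ≤ 0} with hSdef
  have hSne : S.Nonempty := ⟨t₃, ⟨ht₁₃.le, le_refl _⟩, hDt₃.le⟩
  have hSclosed : IsClosed S := by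
    exact hDcont.preimage_isClosed_of_isClosed isClosed_Icc (isClosed_Iic (a := (0:ℝ)))
  have hSbdd : BddBelow S := ⟨t₁, fun x hx => hx.1.1⟩
  set t₂ : ℝ := sInf S with ht₂def
  have ht₂S : t₂ ∈ S := hSclosed.csInf_mem hSne hSbdd
  have ht₂mem : t₂ ∈ Icc t₁ t₃ := ht₂S.1
  have hDt₂le : D t₂ ≤ 0 := ht₂S.2
  have ht₁₂ : t₁ < t₂ := by
    rcases lt_or_eq_of_le ht₂mem.1 with h | h
    · exact h
    · rw [← h] at hDt₂le; linarith
  have hpos : ∀ t ∈ Ico t₁ t₂, 0 < D t := by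
    intro t ht
    by_contra hle
    push_neg at hle
    have hmem : t ∈ S := ⟨⟨ht.1, le_trans ht.2.le ht₂mem.2⟩, hle⟩
    have h5 := csInf_le hSbdd hmem
    rw [← ht₂def] at h5
    linarith [ht.2]
  have hmemIco : Ico t₁ t₂ ∈ 𝓝[<] t₂ := Ico_mem_nhdsLT_of_mem ⟨ht₁₂, le_refl t₂⟩
  have hDt₂ : D t₂ = 0 := by
    refine le_antisymm hDt₂le ?_
    have h1 : ContinuousWithinAt D (Icc t₁ t₃) t₂ := hDcont t₂ ht₂mem
    have hmem2 : Icc t₁ t₃ ∈ 𝓝[<] t₂ :=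
      mem_of_superset hmemIco (fun x hx => ⟨hx.1, le_trans hx.2.le ht₂mem.2⟩)
    have htend : Tendsto D (𝓝[<] t₂) (𝓝 (D t₂)) :=
      h1.tendsto.mono_left (nhdsWithin_le_of_mem hmem2)
    have hev : ∀ᶠ x in 𝓝[<] t₂, 0 ≤ D x :=
      mem_of_superset hmemIco (fun x hx => (hpos x hx).le)
    exact ge_of_tendsto htend hev
  -- setup at t₂
  have ht₂0 : (0:ℝ) ≤ t₂ := le_trans ht₁.1 ht₂mem.1
  have ht₂T : t₂ < T := lt_of_le_of_lt ht₂mem.2 ht₃T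
  have hs : 0 < T - t₂ := by linarith
  have hsp : 0 < (T - t₂) ^ p := rpow_pos_of_pos hs p
  have hsq0 : 0 < (T - t₂) ^ q := rpow_pos_of_pos hs q
  have hsq : (T - t₂) ^ p * (T - t₂) = (T - t₂) ^ q := by
    rw [← hpq, rpow_add hs, rpow_one]
  have hΓeq : Γ M t₂ = C / (T - t₂) ^ p := by
    have : Γ M t₂ - W t₂ = 0 := hDt₂
    have hW : W t₂ = C / (T - t₂) ^ p := rfl
    rw [hW] at this
    linarith
  -- derivative of W at t₂
  have hW' : HasDerivAt W (p * C / ((T - t₂) ^ p * (T - t₂))) t₂ := by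
    have h1 : HasDerivAt (fun t => T - t) (-1:ℝ) t₂ := (hasDerivAt_id t₂).const_sub T
    have h2 : HasDerivAt (fun t => (T - t) ^ p) ((-1) * p * (T - t₂) ^ (p-1)) t₂ :=
      h1.rpow_const (Or.inl hs.ne')
    have h3 := (h2.inv hsp.ne').const_mul C
    have heq : (fun t => C * ((T - t)^p)⁻¹) = W := by
      funext t; rw [hWdef]; simp [div_eq_mul_inv]
    change HasDerivAt (fun t => C * ((T - t)^p)⁻¹) _ t₂ at h3
    rw [heq] at h3
    convert h3 using 1
    have hsp1 : (T - t₂) ^ (p - 1) = (T - t₂) ^ p / (T - t₂) := by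
      rw [rpow_sub hs, rpow_one]
    rw [hsp1]
    field_simp
  -- derivative of Γ M at t₂ and the key inequality
  have hΓ' := hode M hM t₂ ⟨ht₂0, ht₂T⟩
  have hval : |Γ M t₂| ^ qs / ((qs-1) * Λ^(qs-1)) - Λ
      = (C ^ qs / (T - t₂) ^ q) / ((1/p) * K) - Λ := by
    rw [hΓeq, abs_of_pos (by positivity), div_rpow hC0.le hsp.le, ← rpow_mul hs.le,
      hpqs, hqs1, hKdef]
  rw [hval] at hΓ'
  have hD' : HasDerivAt D
      ((C ^ qs / (T - t₂) ^ q) / ((1/p) * K) - Λ - p * C / ((T - t₂) ^ p * (T - t₂))) t₂ :=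
    hΓ'.sub hW'
  have hkey : 0 < (C ^ qs / (T - t₂) ^ q) / ((1/p) * K) - Λ
      - p * C / ((T - t₂) ^ p * (T - t₂)) := by
    rw [hsq]
    have hYT : (T - t₂) ^ q ≤ T ^ q := rpow_le_rpow hs.le (by linarith) hq0.le
    set Y : ℝ := (T - t₂) ^ q with hYdef
    set X : ℝ := C ^ qs with hXdef
    clear_value X Y
    have hpA : p * A = Λ * T^q + 1 := by rw [hAdef]; field_simp
    have h1 : X / Y / (1/p * K) = p * X / (K * Y) := by
      field_simp
    rw [h1]
    have h2 : p * X / (K*Y) - p*C/Y = (p*X - p*(K*C))/(K*Y) := by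
      field_simp
    have f2 : p*(K*C) + K*(Λ*T^q+1) ≤ p*X := by
      calc p*(K*C) + K*(Λ*T^q+1) = p*(K*C + K*A) := by rw [← hpA]; ring
      _ ≤ p*X := mul_le_mul_of_nonneg_left hCbig hp0.le
    have f3 : Λ * (K*Y) ≤ Λ * (K * T^q) :=
      mul_le_mul_of_nonneg_left (mul_le_mul_of_nonneg_left hYT hK.le) hΛ.le
    have h3 : Λ * (K*Y) < p*X - p*(K*C) := by linarith only [f2, f3, hK]
    have h4 : Λ < (p*X - p*(K*C))/(K*Y) := (lt_div_iff₀ (by positivity)).mpr h3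
    rw [← h2] at h4
    linarith
  -- slope contradiction
  rw [hasDerivAt_iff_tendsto_slope] at hD'
  have hslope : ∀ᶠ x in 𝓝[≠] t₂, 0 < slope D t₂ x := hD'.eventually (lt_mem_nhds hkey)
  have hslope' : ∀ᶠ x in 𝓝[<] t₂, 0 < slope D t₂ x :=
    hslope.filter_mono (nhdsWithin_mono _ (fun x hx => ne_of_lt hx))
  have hev2 : ∀ᶠ x in 𝓝[<] t₂, x ∈ Ico t₁ t₂ := hmemIco
  obtain ⟨x, hx1, hx2⟩ := (hslope'.and hev2).exists
  have hDx : 0 < D x := hpos x hx2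
  rw [slope_def_field] at hx1
  have hneg : (D x - D t₂) / (x - t₂) < 0 :=
    div_neg_of_pos_of_neg (by rw [hDt₂]; linarith) (by linarith [hx2.2])
  linarith
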